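/- Let n_c, n_o, n_d be positive integers. Let V_o : ℝ^{n_o} → ℝ and V_c : ℝ^{n_c} → ℝ be nonnegative continuously differentiable functions, f_o : ℝ^{n_o} × ℝ^{n_d} → ℝ^{n_o}, f_c : ℝ^{n_c} × ℝ^{n_o} → ℝ^{n_c}, and let α_o, γ_o, α_c, γ_c be class K∞ functions such that for all x, e, d: ⟨∇V_o(e), f_o(e,d)⟩ ≤ −α_o(V_o(e)) + γ_o(‖d‖) and ⟨∇V_c(x), f_c(x,e)⟩ ≤ −α_c(V_c(x)) + γ_c(V_o(e)). Let ν : [0,∞) → [0,∞) be continuous and nondecreasing with ν(s) ≥ 4·γ_c(s)/α_o(s) for all s > 0, and define V(x,e) := ∫₀^{V_o(e)} ν(r) dr + V_c(x). Then there exist class K∞ functions α and γ such that for all (x,e,d) ∈ ℝ^{n_c} × ℝ^{n_o} × ℝ^{n_d}: ⟨∇V(x,e), (f_c(x,e), f_o(e,d))⟩ ≤ −α(V(x,e)) + γ(‖d‖). -/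

import Mathlib

open scoped RealInnerProductSpace

/-- A class `K` function: continuous, strictly increasing on `[0,∞)`, vanishing at `0`. -/
def IsClassK (f : ℝ → ℝ) : Prop :=
  ContinuousOn f (Set.Ici 0) ∧ StrictMonoOn f (Set.Ici 0) ∧ f 0 = 0

/-- A class `K∞` function: a class `K` function that is unbounded. -/
def IsClassKInf (f : ℝ → ℝ) : Prop :=
  IsClassK f ∧ ∀ M : ℝ, ∃ s, 0 ≤ s ∧ M < f s

open Set Filter MeasureTheory intervalIntegral

lemma classK_nonneg {f : ℝ → ℝ} (hf : IsClassK f) {s : ℝ} (hs : 0 ≤ s) : 0 ≤ f s := by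
  rcases eq_or_lt_of_le hs with h | h
  · simp [← h, hf.2.2]
  · have := hf.2.1 (self_mem_Ici) (le_of_lt h : (0:ℝ) ≤ s) h
    simpa [hf.2.2] using this.le

lemma classK_pos {f : ℝ → ℝ} (hf : IsClassK f) {s : ℝ} (hs : 0 < s) : 0 < f s := by
  have := hf.2.1 (self_mem_Ici) hs.le hs
  simpa [hf.2.2] using this

section FProps

variable {ν : ℝ → ℝ} (hν_cont : ContinuousOn ν (Set.Ici 0))

lemma nu_intInt (hν_cont : ContinuousOn ν (Set.Ici 0)) {a b : ℝ} (ha : 0 ≤ a) (hb : 0 ≤ b) :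
    IntervalIntegrable ν volume a b := by
  apply ContinuousOn.intervalIntegrable
  apply hν_cont.mono
  intro x hx
  have h1 : min a b ≤ x := hx.1
  exact le_trans (le_min ha hb) h1

/-- `F q - F p ≥ ν p * (q-p)` for `0 ≤ p ≤ q`. -/
lemma F_lb (hν_cont : ContinuousOn ν (Set.Ici 0)) (hν_mono : MonotoneOn ν (Set.Ici 0))
    {p q : ℝ} (hp : 0 ≤ p) (hpq : p ≤ q) :
    (∫ r in (0:ℝ)..p, ν r) + ν p * (q - p) ≤ ∫ r in (0:ℝ)..q, ν r := by
  have hq : 0 ≤ q := hp.trans hpq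
  have hadj : (∫ r in (0:ℝ)..p, ν r) + (∫ r in p..q, ν r) = ∫ r in (0:ℝ)..q, ν r :=
    integral_add_adjacent_intervals (nu_intInt hν_cont le_rfl hp) (nu_intInt hν_cont hp hq)
  have hmono : (∫ r in p..q, (ν p)) ≤ ∫ r in p..q, ν r := by
    apply integral_mono_on hpq (intervalIntegrable_const) (nu_intInt hν_cont hp hq)
    intro x hx
    exact hν_mono (mem_Ici.mpr hp) (mem_Ici.mpr (hp.trans hx.1)) hx.1
  rw [intervalIntegral.integral_const] at hmono
  have : ν p * (q - p) ≤ ∫ r in p..q, ν r := by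
    calc ν p * (q - p) = (q - p) • ν p := by rw [smul_eq_mul]; ring
    _ ≤ _ := hmono
  linarith [hadj, this]

lemma F_ub (hν_cont : ContinuousOn ν (Set.Ici 0)) (hν_mono : MonotoneOn ν (Set.Ici 0))
    {q : ℝ} (hq : 0 ≤ q) :
    (∫ r in (0:ℝ)..q, ν r) ≤ ν q * q := by
  have hmono : (∫ r in (0:ℝ)..q, ν r) ≤ ∫ r in (0:ℝ)..q, (ν q) := by
    apply integral_mono_on hq (nu_intInt hν_cont le_rfl hq) (intervalIntegrable_const)
    intro x hx
    exact hν_mono (mem_Ici.mpr hx.1) (mem_Ici.mpr hq) hx.2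
  rw [intervalIntegral.integral_const] at hmono
  calc (∫ r in (0:ℝ)..q, ν r) ≤ (q - 0) • ν q := hmono
  _ = ν q * q := by rw [smul_eq_mul]; ring

end FProps

lemma exists_inverse {f : ℝ → ℝ} (hf : IsClassKInf f) :
    ∃ g : ℝ → ℝ, Continuous g ∧ StrictMono g ∧ g 0 = 0 ∧
      (∀ t, 0 ≤ t → 0 ≤ g t) ∧ (∀ t, 0 ≤ t → f (g t) = t) ∧ (∀ s, 0 ≤ s → g (f s) = s) := by
  obtain ⟨⟨hcont, hmono, hf0⟩, hunb⟩ := hf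
  have hnn : ∀ s : ℝ, 0 ≤ s → 0 ≤ f s := fun s hs => classK_nonneg ⟨hcont, hmono, hf0⟩ hs
  set F : ℝ → ℝ := fun t => f (max t 0) + min t 0 with hFdef
  have hFeq : ∀ t : ℝ, 0 ≤ t → F t = f t := fun t ht => by
    simp [hFdef, max_eq_left ht, min_eq_right ht]
  have hFneg : ∀ t : ℝ, t ≤ 0 → F t = t := fun t ht => by
    simp [hFdef, max_eq_right ht, min_eq_left ht, hf0]
  have hFc : Continuous F := by
    refine Continuous.add ?_ (continuous_id.min continuous_const)
    exact hcont.comp_continuous (continuous_id.max continuous_const) (fun x => mem_Ici.mpr (le_max_right _ _))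
  have hFm : StrictMono F := by
    intro a b hab
    rcases le_or_gt b 0 with hb | hb
    · rw [hFneg a (hab.le.trans hb), hFneg b hb]; exact hab
    rcases le_or_gt a 0 with ha | ha
    · have hb' : 0 < f b := by
        have := hmono self_mem_Ici (le_of_lt hb) hb
        simpa [hf0] using this
      rw [hFneg a ha, hFeq b hb.le]
      exact lt_of_le_of_lt ha hb'
    · rw [hFeq a ha.le, hFeq b (ha.trans hab).le]
      exact hmono ha.le (ha.trans hab).le hab
  have hFtop : Tendsto F atTop atTop := by
    apply tendsto_atTop_atTop_of_monotone hFm.monotone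
    intro M
    obtain ⟨s, hs, hMs⟩ := hunb M
    exact ⟨s, by rw [hFeq s hs]; exact hMs.le⟩
  have hFbot : Tendsto F atBot atBot := by
    have h : ∀ᶠ t in atBot, F t = t := by
      filter_upwards [Filter.eventually_le_atBot (0:ℝ)] with t ht using hFneg t ht
    exact Filter.tendsto_atBot_mono' _ (h.mono fun t ht => ht.le) tendsto_id
  have hFsurj : Function.Surjective F := hFc.surjective hFtop hFbot
  let e := StrictMono.orderIsoOfSurjective F hFm hFsurj
  have hgf : ∀ s : ℝ, e.symm (F s) = s := fun s =>
    StrictMono.orderIsoOfSurjective_symm_apply_self F hFm hFsurj s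
  have hfg : ∀ t : ℝ, F (e.symm t) = t := fun t =>
    StrictMono.orderIsoOfSurjective_self_symm_apply F hFm hFsurj t
  have hg0 : e.symm 0 = 0 := by
    have : F 0 = 0 := by rw [hFeq 0 le_rfl, hf0]
    conv_lhs => rw [← this]
    exact hgf 0
  have hgnn : ∀ t : ℝ, 0 ≤ t → 0 ≤ e.symm t := by
    intro t ht
    rw [← hg0]
    exact e.symm.monotone ht
  refine ⟨fun t => e.symm t, e.symm.continuous, e.symm.strictMono, hg0, hgnn, ?_, ?_⟩
  · intro t ht
    show f (e.symm t) = t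
    rw [← hFeq _ (hgnn t ht)]; exact hfg t
  · intro s hs
    show e.symm (f s) = s
    rw [← hFeq s hs]; exact hgf s

set_option maxHeartbeats 2000000 in
theorem stmt_3 (nc no nd : ℕ) (hnc : 0 < nc) (hno : 0 < no) (hnd : 0 < nd)
    (V_o : EuclideanSpace ℝ (Fin no) → ℝ) (V_c : EuclideanSpace ℝ (Fin nc) → ℝ)
    (hVo_nonneg : ∀ e, 0 ≤ V_o e) (hVc_nonneg : ∀ x, 0 ≤ V_c x)
    (hVo_smooth : ContDiff ℝ 1 V_o) (hVc_smooth : ContDiff ℝ 1 V_c)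
    (f_o : EuclideanSpace ℝ (Fin no) → EuclideanSpace ℝ (Fin nd) → EuclideanSpace ℝ (Fin no))
    (f_c : EuclideanSpace ℝ (Fin nc) → EuclideanSpace ℝ (Fin no) → EuclideanSpace ℝ (Fin nc))
    (α_o γ_o α_c γ_c : ℝ → ℝ)
    (hα_o : IsClassKInf α_o) (hγ_o : IsClassKInf γ_o)
    (hα_c : IsClassKInf α_c) (hγ_c : IsClassKInf γ_c)
    (hdiss_o : ∀ e d, ⟪gradient V_o e, f_o e d⟫ ≤ -α_o (V_o e) + γ_o ‖d‖)
    (hdiss_c : ∀ x e, ⟪gradient V_c x, f_c x e⟫ ≤ -α_c (V_c x) + γ_c (V_o e))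
    (ν : ℝ → ℝ) (hν_cont : ContinuousOn ν (Set.Ici 0))
    (hν_mono : MonotoneOn ν (Set.Ici 0)) (hν_nonneg : ∀ s, 0 ≤ s → 0 ≤ ν s)
    (hν_ge : ∀ s, 0 < s → 4 * γ_c s / α_o s ≤ ν s)
    -- `V (x, e) = ∫₀^{V_o e} ν + V_c x`; its derivative along the cascade vector field
    -- `(f_c (x,e), f_o (e,d))` is the sum of the two partial-gradient pairings below.
    (V : EuclideanSpace ℝ (Fin nc) → EuclideanSpace ℝ (Fin no) → ℝ)
    (hV : ∀ x e, V x e = (∫ r in (0:ℝ)..(V_o e), ν r) + V_c x) :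
    ∃ α γ : ℝ → ℝ, IsClassKInf α ∧ IsClassKInf γ ∧
      ∀ (x : EuclideanSpace ℝ (Fin nc)) (e : EuclideanSpace ℝ (Fin no))
        (d : EuclideanSpace ℝ (Fin nd)),
        ⟪gradient (fun x' => V x' e) x, f_c x e⟫ + ⟪gradient (fun e' => V x e') e, f_o e d⟫ ≤
          -α (V x e) + γ ‖d‖ := by
  classical
  set Fν : ℝ → ℝ := fun t => ∫ r in (0:ℝ)..t, ν r with hFνdef
  have hF0 : Fν 0 = 0 := intervalIntegral.integral_same
  have νpos : ∀ s : ℝ, 0 < s → 0 < ν s := by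
    intro s hs
    have h1 : 0 < 4 * γ_c s / α_o s := by
      apply div_pos
      · have := classK_pos hγ_c.1 hs; linarith
      · exact classK_pos hα_o.1 hs
    exact lt_of_lt_of_le h1 (hν_ge s hs)
  have hFlb : ∀ p q : ℝ, 0 ≤ p → p ≤ q → Fν p + ν p * (q - p) ≤ Fν q :=
    fun p q hp hpq => F_lb hν_cont hν_mono hp hpq
  have hFnn : ∀ t : ℝ, 0 ≤ t → 0 ≤ Fν t := by
    intro t ht
    have := hFlb 0 t le_rfl ht
    have h2 : 0 ≤ ν 0 * (t - 0) := mul_nonneg (hν_nonneg 0 le_rfl) (by linarith)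
    rw [hF0] at this
    linarith
  have hFsm : StrictMonoOn Fν (Set.Ici 0) := by
    intro a ha b hb hab
    set m := (a + b) / 2 with hm
    have ham : a < m := by rw [hm]; linarith
    have hmb : m < b := by rw [hm]; linarith
    have hm0 : 0 < m := lt_of_le_of_lt ha ham
    have h1 := hFlb a m ha ham.le
    have h2 := hFlb m b hm0.le hmb.le
    have h3 : 0 < ν m * (b - m) := mul_pos (νpos m hm0) (by linarith)
    have h4 : 0 ≤ ν a * (m - a) := mul_nonneg (hν_nonneg a ha) (by linarith)
    linarith
  have hFcont : ContinuousOn Fν (Set.Ici 0) := by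
    intro t ht
    have h1 : 0 ≤ t := ht
    have hsub : Set.uIcc (0:ℝ) (t+1) = Set.Icc 0 (t+1) := Set.uIcc_of_le (by linarith)
    have hint : IntegrableOn ν (Set.uIcc (0:ℝ) (t+1)) volume := by
      rw [hsub]
      apply ContinuousOn.integrableOn_Icc
      exact hν_cont.mono (fun x hx => hx.1)
    have hcont := (continuousOn_primitive_interval hint)
    have htm : t ∈ Set.uIcc (0:ℝ) (t+1) := by rw [hsub]; exact ⟨h1, by linarith⟩
    have hc : ContinuousWithinAt Fν (Set.uIcc (0:ℝ) (t+1)) t := hcont t htm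
    apply hc.mono_of_mem_nhdsWithin
    rw [hsub]
    have : Set.Icc 0 (t+1) = Set.Ici 0 ∩ Set.Iic (t+1) := (Set.Ici_inter_Iic).symm
    rw [this]
    exact inter_mem self_mem_nhdsWithin
      (mem_nhdsWithin_of_mem_nhds (Iic_mem_nhds (by linarith)))
  have hFunb : ∀ M : ℝ, ∃ s, 0 ≤ s ∧ M < Fν s := by
    intro M
    have hν1 : 0 < ν 1 := νpos 1 one_pos
    set s := 1 + (max M 0 + 1) / ν 1 with hs
    have hdnn : 0 ≤ (max M 0 + 1) / ν 1 := by positivity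
    have hs1 : (1:ℝ) ≤ s := by rw [hs]; linarith
    refine ⟨s, by linarith, ?_⟩
    have h1 := hFlb 1 s zero_le_one hs1
    have h2 : ν 1 * (s - 1) = max M 0 + 1 := by
      rw [hs]
      field_simp
      ring
    have h3 : 0 ≤ Fν 1 := hFnn 1 zero_le_one
    have h4 : M ≤ max M 0 := le_max_left _ _
    linarith
  have hFK : IsClassKInf Fν := ⟨⟨hFcont, hFsm, hF0⟩, hFunb⟩
  have hFderiv : ∀ s : ℝ, 0 < s → HasDerivAt Fν (ν s) s := by
    intro s hs
    apply intervalIntegral.integral_hasDerivAt_right (nu_intInt hν_cont le_rfl hs.le)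
    · exact ContinuousOn.stronglyMeasurableAtFilter isOpen_Ioi
        (hν_cont.mono (Set.Ioi_subset_Ici le_rfl)) s hs
    · exact hν_cont.continuousAt (Ici_mem_nhds hs)
  obtain ⟨aoi, aoi_cont, aoi_sm, aoi0, aoi_nn, aoi_right, aoi_left⟩ := exists_inverse hα_o
  obtain ⟨Fi, Fi_cont, Fi_sm, Fi0, Fi_nn, Fi_right, Fi_left⟩ := exists_inverse hFK
  -- the candidate gain functions
  set g : ℝ → ℝ := fun p => (1/4) * (ν p * α_o p) with hgdef
  have hg_nn : ∀ p : ℝ, 0 ≤ p → 0 ≤ g p := fun p hp =>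
    mul_nonneg (by norm_num) (mul_nonneg (hν_nonneg p hp) (classK_nonneg hα_o.1 hp))
  have hg_mono : MonotoneOn g (Set.Ici 0) := by
    intro p hp q hq hpq
    apply mul_le_mul_of_nonneg_left _ (by norm_num : (0:ℝ) ≤ 1/4)
    exact mul_le_mul (hν_mono hp hq hpq) (hα_o.1.2.1.monotoneOn hp hq hpq)
      (classK_nonneg hα_o.1 hp) (hν_nonneg q hq)
  have hg_sm : StrictMonoOn g (Set.Ici 0) := by
    intro p hp q hq hpq
    apply mul_lt_mul_of_pos_left _ (by norm_num : (0:ℝ) < 1/4)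
    have h1 : ν p * α_o p ≤ ν q * α_o p :=
      mul_le_mul_of_nonneg_right (hν_mono hp hq hpq.le) (classK_nonneg hα_o.1 hp)
    have h2 : ν q * α_o p < ν q * α_o q :=
      mul_lt_mul_of_pos_left (hα_o.1.2.1 hp hq hpq) (νpos q (lt_of_le_of_lt hp hpq))
    linarith
  set α : ℝ → ℝ := fun t => min (α_c (t/2)) (g (Fi (t/2))) with hαdef
  set γ : ℝ → ℝ := fun D => ν (aoi (2 * γ_o D)) * γ_o D + γ_o D with hγdef
  have half_nn : ∀ t : ℝ, 0 ≤ t → (0:ℝ) ≤ t/2 := fun t ht => by linarith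
  have hαK : IsClassKInf α := by
    refine ⟨⟨?_, ?_, ?_⟩, ?_⟩
    · apply ContinuousOn.inf
      · exact hα_c.1.1.comp ((continuous_id.div_const 2).continuousOn)
          (fun t ht => half_nn t ht)
      · have hc1 : ContinuousOn (fun t : ℝ => Fi (t/2)) (Set.Ici 0) :=
          (Fi_cont.comp (continuous_id.div_const 2)).continuousOn
        have hmap : Set.MapsTo (fun t : ℝ => Fi (t/2)) (Set.Ici 0) (Set.Ici 0) :=
          fun t ht => Fi_nn _ (half_nn t ht)
        apply ContinuousOn.mul continuousOn_const
        exact (hν_cont.comp hc1 hmap).mul (hα_o.1.1.comp hc1 hmap)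
    · intro a ha b hb hab
      have h1 : α_c (a/2) < α_c (b/2) :=
        hα_c.1.2.1 (half_nn a ha) (half_nn b hb) (by linarith)
      have h2 : g (Fi (a/2)) < g (Fi (b/2)) :=
        hg_sm (Fi_nn _ (half_nn a ha)) (Fi_nn _ (half_nn b hb))
          (Fi_sm (by linarith : a/2 < b/2))
      exact lt_min ((min_le_left _ _).trans_lt h1) ((min_le_right _ _).trans_lt h2)
    · show min (α_c (0/2)) (g (Fi (0/2))) = 0
      norm_num [Fi0, hgdef, hα_c.1.2.2, hα_o.1.2.2]
    · intro M
      obtain ⟨s₁, hs₁, hMs₁⟩ := hα_c.2 M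
      have hν1 : 0 < ν 1 := νpos 1 one_pos
      obtain ⟨r₀, hr₀, hMr₀⟩ := hα_o.2 ((4 * |M| + 4) / ν 1)
      set r := max r₀ 1 with hr
      have hr1 : (1:ℝ) ≤ r := le_max_right _ _
      have hr0 : (0:ℝ) ≤ r := by linarith
      have hgr : M < g r := by
        have h1 : ν 1 ≤ ν r := hν_mono (mem_Ici.mpr zero_le_one) (mem_Ici.mpr hr0) hr1
        have h2 : α_o r₀ ≤ α_o r := hα_o.1.2.1.monotoneOn hr₀ hr0 (le_max_left _ _)
        have h3 : (4 * |M| + 4) / ν 1 < α_o r := lt_of_lt_of_le hMr₀ h2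
        have h4 : 4 * |M| + 4 < ν 1 * α_o r := by
          rw [div_lt_iff₀ hν1] at h3; linarith [h3]
        have h5 : ν 1 * α_o r ≤ ν r * α_o r := by
          apply mul_le_mul_of_nonneg_right h1
          have := classK_nonneg hα_o.1 hr0; linarith
        have h6 : M ≤ |M| := le_abs_self M
        rw [hgdef]
        simp only
        nlinarith
      set t := max (2 * s₁) (2 * Fν r) with ht
      have ht0 : 0 ≤ t := le_trans (by linarith : (0:ℝ) ≤ 2*s₁) (le_max_left _ _)
      refine ⟨t, ht0, ?_⟩
      have h1 : s₁ ≤ t/2 := by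
        have := le_max_left (2*s₁) (2*Fν r); rw [← ht] at this; linarith
      have h2 : Fν r ≤ t/2 := by
        have := le_max_right (2*s₁) (2*Fν r); rw [← ht] at this; linarith
      have hA : M < α_c (t/2) :=
        lt_of_lt_of_le hMs₁ (hα_c.1.2.1.monotoneOn hs₁ (hs₁.trans h1) h1)
      have hB : M < g (Fi (t/2)) := by
        have hrfi : r ≤ Fi (t/2) := by
          have := Fi_sm.monotone h2
          rwa [Fi_left r hr0] at this
        exact lt_of_lt_of_le hgr (hg_mono hr0 (hr0.trans hrfi) hrfi)
      exact lt_min hA hB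
  have hγoK := hγ_o.1
  have hγK : IsClassKInf γ := by
    have hcD : ∀ D : ℝ, 0 ≤ D → 0 ≤ aoi (2 * γ_o D) := fun D hD =>
      aoi_nn _ (by have := classK_nonneg hγoK hD; linarith)
    refine ⟨⟨?_, ?_, ?_⟩, ?_⟩
    · have hc1 : ContinuousOn (fun D : ℝ => aoi (2 * γ_o D)) (Set.Ici 0) :=
        aoi_cont.comp_continuousOn ((continuous_const.mul continuous_id).comp_continuousOn hγoK.1)
      have hmap : Set.MapsTo (fun D : ℝ => aoi (2 * γ_o D)) (Set.Ici 0) (Set.Ici 0) :=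
        fun D hD => hcD D hD
      exact ((hν_cont.comp hc1 hmap).mul hγoK.1).add hγoK.1
    · intro a ha b hb hab
      have hγa : 0 ≤ γ_o a := classK_nonneg hγoK ha
      have hγab : γ_o a < γ_o b := hγoK.2.1 ha hb hab
      have hca : ν (aoi (2 * γ_o a)) ≤ ν (aoi (2 * γ_o b)) :=
        hν_mono (hcD a ha) (hcD b hb) (aoi_sm.monotone (by linarith))
      have hcb : 0 ≤ ν (aoi (2 * γ_o b)) := hν_nonneg _ (hcD b hb)
      have h1 : ν (aoi (2 * γ_o a)) * γ_o a ≤ ν (aoi (2 * γ_o b)) * γ_o b :=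
        mul_le_mul hca hγab.le hγa hcb
      simp only [hγdef]
      linarith
    · simp [hγdef, hγoK.2.2]
    · intro M
      obtain ⟨D, hD, hMD⟩ := hγ_o.2 M
      refine ⟨D, hD, lt_of_lt_of_le hMD ?_⟩
      have h1 : 0 ≤ ν (aoi (2 * γ_o D)) * γ_o D :=
        mul_nonneg (hν_nonneg _ (hcD D hD)) (classK_nonneg hγoK hD)
      simp only [hγdef]
      linarith
  refine ⟨α, γ, hαK, hγK, ?_⟩
  intro x e d
  have hs : 0 ≤ V_o e := hVo_nonneg e
  have hD : (0:ℝ) ≤ ‖d‖ := norm_nonneg d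
  have hγoD : 0 ≤ γ_o ‖d‖ := classK_nonneg hγ_o.1 hD
  -- gradient in the x variable
  have hgx : gradient (fun x' => V x' e) x = gradient V_c x := by
    have h1 : (fun x' => V x' e) = fun x' => Fν (V_o e) + V_c x' :=
      funext fun x' => hV x' e
    rw [h1]
    have hd : DifferentiableAt ℝ V_c x := (hVc_smooth.differentiable one_ne_zero) x
    have h2 : HasGradientAt (fun x' => Fν (V_o e) + V_c x') (gradient V_c x) x := by
      have h3 := (hd.hasGradientAt.hasFDerivAt.const_add (Fν (V_o e))).hasGradientAt
      simpa [gradient] using h3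
    exact h2.gradient
  -- bound on the e-pairing
  have hkey_e : ⟪gradient (fun e' => V x e') e, f_o e d⟫ ≤
      ν (V_o e) * (-α_o (V_o e) + γ_o ‖d‖) := by
    have h1 : (fun e' => V x e') = fun e' => Fν (V_o e') + V_c x :=
      funext fun e' => hV x e'
    rw [h1]
    rcases eq_or_lt_of_le hs with heq | hpos
    · -- V_o e = 0 : the gradient vanishes
      have hdV : DifferentiableAt ℝ V_o e := (hVo_smooth.differentiable one_ne_zero) e
      have hmin : IsLocalMin V_o e := Filter.Eventually.of_forall fun e' => by
        rw [← heq]; exact hVo_nonneg e'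
      have hfd0 : HasFDerivAt V_o (0 : EuclideanSpace ℝ (Fin no) →L[ℝ] ℝ) e := by
        have h2 := hdV.hasFDerivAt
        rwa [hmin.fderiv_eq_zero] at h2
      have hVo_lo : (fun e' => V_o e') =o[nhds e] (fun e' => e' - e) := by
        have h3 := hfd0.isLittleO
        simpa [← heq] using h3
      have htend : Filter.Tendsto (fun e' => ν (V_o e')) (nhds e) (nhds (ν 0)) := by
        have h5 : Filter.Tendsto V_o (nhds e) (nhdsWithin 0 (Set.Ici 0)) := by
          rw [tendsto_nhdsWithin_iff]
          refine ⟨?_, Filter.Eventually.of_forall fun e' => hVo_nonneg e'⟩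
          have h6 := hdV.continuousAt.tendsto
          rwa [← heq] at h6
        exact (hν_cont 0 self_mem_Ici).tendsto.comp h5
      have hbnd : ∀ᶠ e' in nhds e, ‖Fν (V_o e')‖ ≤ (ν 0 + 1) * ‖V_o e'‖ := by
        have hev : ∀ᶠ e' in nhds e, ν (V_o e') < ν 0 + 1 :=
          htend.eventually_lt_const (by linarith)
        filter_upwards [hev] with e' he'
        have h0 : 0 ≤ V_o e' := hVo_nonneg e'
        have h6 : 0 ≤ Fν (V_o e') := hFnn _ h0
        have h7 : Fν (V_o e') ≤ ν (V_o e') * V_o e' := F_ub hν_cont hν_mono h0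
        rw [Real.norm_eq_abs, Real.norm_eq_abs, abs_of_nonneg h6, abs_of_nonneg h0]
        nlinarith [hν_nonneg _ h0]
      have hlo : (fun e' => Fν (V_o e')) =o[nhds e] (fun e' => e' - e) :=
        (Asymptotics.IsBigO.of_bound _ hbnd).trans_isLittleO hVo_lo
      have hfdF : HasFDerivAt (fun e' => Fν (V_o e') + V_c x)
          (0 : EuclideanSpace ℝ (Fin no) →L[ℝ] ℝ) e := by
        apply HasFDerivAt.of_isLittleO
        simpa [← heq, hF0] using hlo
      have hg0' : gradient (fun e' => Fν (V_o e') + V_c x) e = 0 := by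
        have h8 := hfdF.hasGradientAt.gradient
        simpa using h8
      rw [hg0', inner_zero_left, ← heq, hα_o.1.2.2]
      have h9 : 0 ≤ ν 0 := hν_nonneg 0 le_rfl
      nlinarith
    · -- V_o e > 0 : chain rule
      have hdV : DifferentiableAt ℝ V_o e := (hVo_smooth.differentiable one_ne_zero) e
      have hG := hdV.hasGradientAt
      have hFd := hFderiv _ hpos
      have hcomp := hFd.comp_hasFDerivAt e hG.hasFDerivAt
      have hsum := hcomp.add_const (V_c x)
      have hgrad : HasGradientAt (fun e' => Fν (V_o e') + V_c x)
          (ν (V_o e) • gradient V_o e) e := by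
        have h7 := hsum.hasGradientAt
        simpa [Function.comp, _root_.map_smul, gradient] using h7
      rw [hgrad.gradient, real_inner_smul_left]
      exact mul_le_mul_of_nonneg_left (hdiss_o e d) (hν_nonneg _ hs)
  -- combine the supply rates
  have haoiD : 0 ≤ aoi (2 * γ_o ‖d‖) := aoi_nn _ (by linarith)
  have hγ1nn : 0 ≤ ν (aoi (2 * γ_o ‖d‖)) * γ_o ‖d‖ := mul_nonneg (hν_nonneg _ haoiD) hγoD
  have hK2 : γ_c (V_o e) + ν (V_o e) * (-α_o (V_o e) + γ_o ‖d‖) ≤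
      -g (V_o e) + ν (aoi (2 * γ_o ‖d‖)) * γ_o ‖d‖ := by
    rcases eq_or_lt_of_le hs with heq | hpos
    · have hν0 : ν 0 ≤ ν (aoi (2 * γ_o ‖d‖)) := hν_mono self_mem_Ici haoiD haoiD
      have h2 := mul_le_mul_of_nonneg_right hν0 hγoD
      have hgs : g (V_o e) = 1/4 * (ν (V_o e) * α_o (V_o e)) := rfl
      rw [hgs, ← heq, hγ_c.1.2.2, hα_o.1.2.2]
      nlinarith
    · have hαs : 0 < α_o (V_o e) := classK_pos hα_o.1 hpos
      have h4 : 4 * γ_c (V_o e) ≤ ν (V_o e) * α_o (V_o e) := by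
        have h5 := hν_ge _ hpos
        rw [div_le_iff₀ hαs] at h5
        linarith
      have hνs : 0 ≤ ν (V_o e) := hν_nonneg _ hs
      have hX : 0 ≤ ν (V_o e) * α_o (V_o e) := mul_nonneg hνs hαs.le
      rcases le_or_gt (α_o (V_o e)) (2 * γ_o ‖d‖) with hcase | hcase
      · have hsle : V_o e ≤ aoi (2 * γ_o ‖d‖) := by
          have h5 : α_o (V_o e) ≤ α_o (aoi (2 * γ_o ‖d‖)) := by
            rw [aoi_right _ (by linarith : (0:ℝ) ≤ 2 * γ_o ‖d‖)]
            exact hcase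
          exact (hα_o.1.2.1.le_iff_le (mem_Ici.mpr hs) (mem_Ici.mpr haoiD)).mp h5
        have h6 : ν (V_o e) ≤ ν (aoi (2 * γ_o ‖d‖)) := hν_mono hs haoiD hsle
        have h7 : ν (V_o e) * γ_o ‖d‖ ≤ ν (aoi (2 * γ_o ‖d‖)) * γ_o ‖d‖ :=
          mul_le_mul_of_nonneg_right h6 hγoD
        have hgs : g (V_o e) = 1/4 * (ν (V_o e) * α_o (V_o e)) := rfl
        have hexp : ν (V_o e) * (-α_o (V_o e) + γ_o ‖d‖) =
            -(ν (V_o e) * α_o (V_o e)) + ν (V_o e) * γ_o ‖d‖ := by ring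
        rw [hgs, hexp]
        linarith
      · have h7 : ν (V_o e) * γ_o ‖d‖ ≤ ν (V_o e) * (α_o (V_o e) / 2) :=
          mul_le_mul_of_nonneg_left (by linarith) hνs
        have hgs : g (V_o e) = 1/4 * (ν (V_o e) * α_o (V_o e)) := rfl
        have hexp : ν (V_o e) * (-α_o (V_o e) + γ_o ‖d‖) =
            -(ν (V_o e) * α_o (V_o e)) + ν (V_o e) * γ_o ‖d‖ := by ring
        have h8 : ν (V_o e) * (α_o (V_o e) / 2) = (ν (V_o e) * α_o (V_o e)) / 2 := by ring
        rw [hgs, hexp]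
        linarith
  have hK3 : α (V x e) ≤ α_c (V_c x) + g (V_o e) := by
    have hVxe : V x e = Fν (V_o e) + V_c x := hV x e
    have hW0 : 0 ≤ V x e := by
      rw [hVxe]; exact add_nonneg (hFnn _ hs) (hVc_nonneg x)
    rcases le_or_gt (V x e / 2) (V_c x) with hc | hc
    · have h1 : α (V x e) ≤ α_c (V x e / 2) := min_le_left _ _
      have h2 : α_c (V x e / 2) ≤ α_c (V_c x) :=
        hα_c.1.2.1.monotoneOn (half_nn _ hW0) ((half_nn _ hW0).trans hc) hc
      have h3 := hg_nn _ hs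
      linarith
    · have hFs : V x e / 2 ≤ Fν (V_o e) := by linarith [hVxe.ge, hVxe.le]
      have hFi : Fi (V x e / 2) ≤ V_o e := by
        have h5 := Fi_sm.monotone hFs
        rwa [Fi_left _ hs] at h5
      have h1 : α (V x e) ≤ g (Fi (V x e / 2)) := min_le_right _ _
      have h2 : g (Fi (V x e / 2)) ≤ g (V_o e) :=
        hg_mono (Fi_nn _ (half_nn _ hW0)) hs hFi
      have h3 : 0 ≤ α_c (V_c x) := classK_nonneg hα_c.1 (hVc_nonneg x)
      linarith
  have hγfin : ν (aoi (2 * γ_o ‖d‖)) * γ_o ‖d‖ ≤ γ ‖d‖ := by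
    simp only [hγdef]
    linarith
  rw [hgx]
  have hc := hdiss_c x e
  have hνfin : 0 ≤ ν (V_o e) := hν_nonneg _ hs
  linarith
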